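/- Let N be a positive integer and let f : ZMod N → ℂ be nonzero. Then |supp f| · |supp 𝓕 f| ≥ N. (This is the Donoho–Stark uncertainty principle, Proposition 3.2 of the paper, specialized to the unimodular Kac algebra L^∞(ℤ/Nℤ).) -/

import Mathlib

open Complex Finset

/-- The unitary discrete Fourier transform on `ZMod N`. -/
noncomputable def dft (N : ℕ) [NeZero N] (f : ZMod N → ℂ) : ZMod N → ℂ :=
  fun k => (((N : ℝ) ^ (-(1/2 : ℝ)) : ℝ) : ℂ) *
    ∑ x : ZMod N, f x *
      Complex.exp (-2 * Real.pi * Complex.I * (k.val : ℂ) * (x.val : ℂ) / (N : ℂ))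

lemma dft_eq_zmod_dft (N : ℕ) [NeZero N] (f : ZMod N → ℂ) (k : ZMod N) :
    dft N f k = (((N : ℝ) ^ (-(1/2 : ℝ)) : ℝ) : ℂ) * ZMod.dft f k := by
  unfold dft
  congr 1
  rw [ZMod.dft_apply]
  refine Finset.sum_congr rfl fun x _ => ?_
  rw [smul_eq_mul, mul_comm (ZMod.stdAddChar _)]
  congr 1
  have : (-(x * k) : ZMod N) = ((-(k.val * x.val : ℤ) : ℤ) : ZMod N) := by
    push_cast
    rw [ZMod.natCast_val, ZMod.natCast_val, ZMod.cast_id, ZMod.cast_id]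
    ring
  rw [this, ZMod.stdAddChar_coe]
  congr 1
  push_cast
  ring

lemma norm_stdAddChar' (N : ℕ) [NeZero N] (a : ZMod N) : ‖ZMod.stdAddChar a‖ = 1 := by
  rw [ZMod.stdAddChar_apply]
  exact Circle.norm_coe _

/-- Donoho–Stark for mathlib's ZMod.dft. -/
lemma donoho_stark_aux (N : ℕ) [NeZero N] (f : ZMod N → ℂ) (hf : f ≠ 0) :
    (N : ℝ) ≤ ((Finset.univ.filter (fun x => f x ≠ 0)).card : ℝ) *
      ((Finset.univ.filter (fun k => ZMod.dft f k ≠ 0)).card : ℝ) := by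
  classical
  set S := Finset.univ.filter (fun x => f x ≠ 0) with hS
  set T := Finset.univ.filter (fun k => ZMod.dft f k ≠ 0) with hT
  obtain ⟨x₀, -, hx₀⟩ := Finset.exists_max_image Finset.univ (fun x => ‖f x‖)
    ⟨0, Finset.mem_univ 0⟩
  have hx₀pos : 0 < ‖f x₀‖ := by
    obtain ⟨y, hy⟩ := Function.ne_iff.mp hf
    calc 0 < ‖f y‖ := norm_pos_iff.mpr hy
    _ ≤ ‖f x₀‖ := hx₀ y (Finset.mem_univ y)
  -- bound on ‖dft f k‖
  have key1 : ∀ k, ‖ZMod.dft f k‖ ≤ S.card * ‖f x₀‖ := by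
    intro k
    rw [ZMod.dft_apply]
    calc ‖∑ j : ZMod N, ZMod.stdAddChar (-(j * k)) • f j‖
        ≤ ∑ j : ZMod N, ‖ZMod.stdAddChar (-(j * k)) • f j‖ := norm_sum_le _ _
      _ = ∑ j : ZMod N, ‖f j‖ := by
          refine Finset.sum_congr rfl fun j _ => ?_
          rw [smul_eq_mul, norm_mul, norm_stdAddChar', one_mul]
      _ = ∑ j ∈ S, ‖f j‖ := by
          rw [hS]
          refine (Finset.sum_filter_of_ne fun j _ h => ?_).symm
          intro hj; rw [hj, norm_zero] at h; exact h rfl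
      _ ≤ ∑ j ∈ S, ‖f x₀‖ := Finset.sum_le_sum fun j _ => hx₀ j (Finset.mem_univ j)
      _ = S.card * ‖f x₀‖ := by rw [Finset.sum_const, nsmul_eq_mul]
  -- inversion
  have hinv : ∀ j, ZMod.dft (ZMod.dft f) j = (N : ℂ) • f (-j) := fun j =>
    congrFun (ZMod.dft_dft f) j
  have key2 : (N : ℝ) * ‖f x₀‖ ≤ T.card * (S.card * ‖f x₀‖) := by
    have h1 : ‖ZMod.dft (ZMod.dft f) (-x₀)‖ = N * ‖f x₀‖ := by
      rw [hinv, neg_neg, norm_smul]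
      simp
    have h2 : ‖ZMod.dft (ZMod.dft f) (-x₀)‖ ≤ T.card * (S.card * ‖f x₀‖) := by
      rw [ZMod.dft_apply]
      calc ‖∑ j : ZMod N, ZMod.stdAddChar (-(j * (-x₀))) • ZMod.dft f j‖
          ≤ ∑ j : ZMod N, ‖ZMod.stdAddChar (-(j * (-x₀))) • ZMod.dft f j‖ := norm_sum_le _ _
        _ = ∑ j : ZMod N, ‖ZMod.dft f j‖ := by
            refine Finset.sum_congr rfl fun j _ => ?_
            rw [smul_eq_mul, norm_mul, norm_stdAddChar', one_mul]
        _ = ∑ j ∈ T, ‖ZMod.dft f j‖ := by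
            rw [hT]
            refine (Finset.sum_filter_of_ne fun j _ h => ?_).symm
            intro hj; rw [hj, norm_zero] at h; exact h rfl
        _ ≤ ∑ j ∈ T, (S.card * ‖f x₀‖) := Finset.sum_le_sum fun j _ => key1 j
        _ = T.card * (S.card * ‖f x₀‖) := by rw [Finset.sum_const, nsmul_eq_mul]
    linarith [h1 ▸ h2]
  have key2' : (N : ℝ) * ‖f x₀‖ ≤ ((T.card : ℝ) * S.card) * ‖f x₀‖ := by
    rw [mul_assoc]; exact key2
  calc (N : ℝ) ≤ (T.card : ℝ) * S.card := le_of_mul_le_mul_right key2' hx₀pos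
    _ = (S.card : ℝ) * T.card := mul_comm _ _

/-- Donoho–Stark uncertainty principle for ZMod N:
if f is nonzero then the product of the support sizes of f and of its
Fourier transform is at least N. -/
theorem donoho_stark (N : ℕ) [NeZero N] (f : ZMod N → ℂ) (hf : f ≠ 0) :
    (Function.support f).ncard * (Function.support (dft N f)).ncard ≥ N := by
  classical
  have hc : (((N : ℝ) ^ (-(1/2 : ℝ)) : ℝ) : ℂ) ≠ 0 := by
    rw [Complex.ofReal_ne_zero]
    exact ne_of_gt (Real.rpow_pos_of_pos (by exact_mod_cast Nat.pos_of_ne_zero (NeZero.ne N)) _)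
  have hsupp : Function.support (dft N f) = Function.support (ZMod.dft f) := by
    ext k
    simp only [Function.mem_support, dft_eq_zmod_dft, mul_ne_zero_iff]
    exact ⟨fun h => h.2, fun h => ⟨hc, h⟩⟩
  have h1 : (Function.support f).ncard
      = (Finset.univ.filter (fun x => f x ≠ 0)).card := by
    rw [← Set.ncard_coe_finset]
    congr 1
    ext x; simp [Function.mem_support]
  have h2 : (Function.support (dft N f)).ncard
      = (Finset.univ.filter (fun k => ZMod.dft f k ≠ 0)).card := by
    rw [hsupp, ← Set.ncard_coe_finset]
    congr 1
    ext x; simp [Function.mem_support]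
  rw [ge_iff_le, h1, h2, ← Nat.cast_le (α := ℝ)]
  push_cast
  exact donoho_stark_aux N f hf
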